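/- For each n ∈ ℕ and s ∈ {1,…,k}, let μ_s^{(n)} and μ_s be probability measures on ℝ with finite second moments, and let (π_s^{(n)})_{s} and (π_s)_s be probability vectors on {1,…,k} with all entries strictly positive. Define ν̄_n as the pushforward of Unif(0,1) under u ↦ Σ_{s=1}^k π_s^{(n)} F_{μ_s^{(n)}}⁻¹(u), and ν̄ as the pushforward of Unif(0,1) under u ↦ Σ_{s=1}^k π_s F_{μ_s}⁻¹(u). If W₂(μ_s^{(n)}, μ_s) → 0 and π_s^{(n)} → π_s as n → ∞ for every s ∈ {1,…,k}, then W₂(ν̄_n, ν̄) → 0. (Continuity of the one-dimensional Wasserstein barycenter, the consistency mechanism underlying Theorem 3.) -/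

import Mathlib

open MeasureTheory ProbabilityTheory Filter

/-- Squared 2-Wasserstein distance between measures on ℝ: infimum of ∫|x−y|² dγ over
couplings γ of P and Q. -/
noncomputable def W2sq (P Q : Measure ℝ) : ℝ :=
  sInf { c : ℝ | ∃ γ : Measure (ℝ × ℝ),
    γ.map Prod.fst = P ∧ γ.map Prod.snd = Q ∧ c = ∫ z, (z.1 - z.2) ^ 2 ∂γ }

/-- 2-Wasserstein distance: square root of `W2sq`. -/
noncomputable def W2 (P Q : Measure ℝ) : ℝ := Real.sqrt (W2sq P Q)

/-- CDF of a measure on ℝ. -/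
noncomputable def cdf' (μ : Measure ℝ) (x : ℝ) : ℝ := (μ (Set.Iic x)).toReal

/-- Quantile function of a measure on ℝ: `F_μ⁻¹(u) = inf {x : F_μ(x) ≥ u}`. -/
noncomputable def quantile' (μ : Measure ℝ) (u : ℝ) : ℝ := sInf { x : ℝ | u ≤ cdf' μ x }

/-- Uniform distribution on (0,1): Lebesgue measure restricted to (0,1). -/
noncomputable def unif01 : Measure ℝ := volume.restrict (Set.Ioo 0 1)

section Quantile
variable (μ : Measure ℝ) [IsProbabilityMeasure μ]

lemma cdf'_eq : cdf' μ = cdf μ := by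
  funext x; rw [cdf_eq_real]; rfl

variable {μ}

lemma quant_set_nonempty {u : ℝ} (hu1 : u < 1) : { x : ℝ | u ≤ cdf' μ x }.Nonempty := by
  rw [cdf'_eq]
  exact ((tendsto_cdf_atTop μ).eventually (eventually_ge_nhds hu1)).exists

lemma quant_set_bddBelow {u : ℝ} (hu0 : 0 < u) : BddBelow { x : ℝ | u ≤ cdf' μ x } := by
  rw [cdf'_eq]
  obtain ⟨x₀, hx₀⟩ := ((tendsto_cdf_atBot μ).eventually (eventually_lt_nhds hu0)).exists
  exact ⟨x₀, fun y hy => by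
    by_contra h
    exact absurd (le_trans hy ((monotone_cdf μ) (le_of_not_ge h))) (not_le.2 hx₀)⟩

lemma quantile'_le_iff {u x : ℝ} (hu0 : 0 < u) (hu1 : u < 1) :
    quantile' μ u ≤ x ↔ u ≤ cdf' μ x := by
  constructor
  · intro h
    rw [cdf'_eq]
    have hne := quant_set_nonempty (μ := μ) hu1
    have key : u ≤ cdf μ (quantile' μ u) := by
      have hrc : ContinuousWithinAt (cdf μ) (Set.Ici (quantile' μ u)) (quantile' μ u) :=
        (cdf μ).right_continuous _
      have hev : ∀ᶠ y in nhdsWithin (quantile' μ u) (Set.Ioi (quantile' μ u)),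
          u ≤ cdf μ y := by
        filter_upwards [self_mem_nhdsWithin] with y hy
        obtain ⟨z, hz, hzy⟩ := exists_lt_of_csInf_lt hne hy
        rw [cdf'_eq] at hz
        exact le_trans hz ((monotone_cdf μ) hzy.le)
      have ht : Filter.Tendsto (cdf μ) (nhdsWithin (quantile' μ u) (Set.Ioi (quantile' μ u)))
          (nhds (cdf μ (quantile' μ u))) :=
        ((cdf μ).right_continuous _).tendsto.mono_left
          (nhdsWithin_mono _ (Set.Ioi_subset_Ici le_rfl))
      exact ge_of_tendsto ht hev
    exact le_trans key ((monotone_cdf μ) h)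
  · intro h
    exact csInf_le (quant_set_bddBelow hu0) h

lemma quantile'_monotoneOn : MonotoneOn (quantile' μ) (Set.Ioo 0 1) := by
  intro u hu v hv huv
  exact le_csInf (quant_set_nonempty hv.2) fun x hx =>
    csInf_le (quant_set_bddBelow hu.1) (le_trans huv hx)

lemma quantile'_aemeasurable : AEMeasurable (quantile' μ) unif01 :=
  aemeasurable_restrict_of_monotoneOn measurableSet_Ioo quantile'_monotoneOn

instance : IsProbabilityMeasure unif01 :=
  ⟨by simp [unif01, Real.volume_Ioo]⟩

lemma map_quantile' : unif01.map (quantile' μ) = μ := by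
  have ham : AEMeasurable (quantile' μ) unif01 := quantile'_aemeasurable
  have : IsProbabilityMeasure (unif01.map (quantile' μ)) := Measure.isProbabilityMeasure_map ham
  refine Measure.ext_of_Iic _ _ fun x => ?_
  rw [Measure.map_apply_of_aemeasurable ham measurableSet_Iic]
  have hset : Set.Ioo (0:ℝ) 1 ∩ (quantile' μ ⁻¹' Set.Iic x)
      = Set.Ioo (0:ℝ) 1 ∩ Set.Iic (cdf μ x) := by
    ext u
    simp only [Set.mem_inter_iff, Set.mem_Ioo, Set.mem_preimage, Set.mem_Iic]
    constructor
    · rintro ⟨⟨h0, h1⟩, h⟩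
      exact ⟨⟨h0, h1⟩, by rw [← cdf'_eq]; exact (quantile'_le_iff h0 h1).1 h⟩
    · rintro ⟨⟨h0, h1⟩, h⟩
      exact ⟨⟨h0, h1⟩, (quantile'_le_iff h0 h1).2 (by rw [cdf'_eq]; exact h)⟩
  rw [unif01, Measure.restrict_apply' measurableSet_Ioo, Set.inter_comm, hset]
  have h0 : 0 ≤ cdf μ x := cdf_nonneg μ x
  have h1 : cdf μ x ≤ 1 := cdf_le_one μ x
  rcases lt_or_eq_of_le h1 with h1' | h1'
  · have : Set.Ioo (0:ℝ) 1 ∩ Set.Iic (cdf μ x) = Set.Ioc 0 (cdf μ x) := by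
      ext u; simp only [Set.mem_inter_iff, Set.mem_Ioo, Set.mem_Iic, Set.mem_Ioc]
      constructor
      · rintro ⟨⟨a, b⟩, c⟩; exact ⟨a, c⟩
      · rintro ⟨a, c⟩; exact ⟨⟨a, lt_of_le_of_lt c h1'⟩, c⟩
    rw [this, Real.volume_Ioc, sub_zero, ← ofReal_cdf]
  · have : Set.Ioo (0:ℝ) 1 ∩ Set.Iic (cdf μ x) = Set.Ioo 0 1 := by
      rw [Set.inter_eq_left]; intro u hu; exact Set.mem_Iic.2 (h1' ▸ hu.2.le)
    rw [this, Real.volume_Ioo, sub_zero, ← ofReal_cdf, ← h1']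

lemma memℒp_quantile' (h2 : MemLp id 2 μ) : MemLp (quantile' μ) 2 unif01 := by
  have := (memLp_map_measure_iff (f := quantile' μ) (g := id)
    (by rw [map_quantile']; exact aestronglyMeasurable_id) quantile'_aemeasurable).1
    (by rw [map_quantile']; exact h2)
  simpa using this

end Quantile

section Hoeffding

/-- `g x s = 1_{s<x} - 1_{s<0}`, so that `∫ s, g x s = x`. -/
noncomputable def gfun (x s : ℝ) : ℝ := (if s < x then 1 else 0) - (if s < 0 then 1 else 0)

lemma gfun_measurable : Measurable (fun p : ℝ × ℝ => gfun p.1 p.2) := by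
  unfold gfun
  exact Measurable.sub
    (Measurable.ite (measurableSet_lt measurable_snd measurable_fst)
      measurable_const measurable_const)
    (Measurable.ite (measurableSet_lt measurable_snd measurable_const)
      measurable_const measurable_const)

lemma gfun_eq_indicator_nonneg {x : ℝ} (hx : 0 ≤ x) :
    gfun x = Set.indicator (Set.Ico 0 x) (fun _ => (1:ℝ)) := by
  funext s
  unfold gfun
  by_cases h2 : s < 0
  · have h1 : s < x := lt_of_lt_of_le h2 hx
    simp [h1, h2, Set.indicator_apply, Set.mem_Ico, not_le.2 h2]
  · by_cases h1 : s < x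
    · simp [h1, h2, Set.indicator_apply, Set.mem_Ico, not_lt.mp h2]
    · simp [h1, h2, Set.indicator_apply, Set.mem_Ico]

lemma gfun_eq_indicator_neg {x : ℝ} (hx : x < 0) :
    gfun x = fun s => -Set.indicator (Set.Ico x 0) (fun _ => (1:ℝ)) s := by
  funext s
  unfold gfun
  by_cases h1 : s < x
  · have h2 : s < 0 := lt_trans h1 hx
    simp [h1, h2, Set.indicator_apply, Set.mem_Ico, not_le.2 h1]
  · by_cases h2 : s < 0
    · simp [h1, h2, Set.indicator_apply, Set.mem_Ico, not_lt.mp h1]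
    · simp [h1, h2, Set.indicator_apply, Set.mem_Ico, not_lt.mp h2]

lemma integral_gfun (x : ℝ) : ∫ s, gfun x s = x := by
  rcases le_or_gt 0 x with hx | hx
  · rw [gfun_eq_indicator_nonneg hx, integral_indicator_const _ measurableSet_Ico]
    simp [Real.volume_Ico, ENNReal.toReal_ofReal hx, hx]
  · rw [gfun_eq_indicator_neg hx, integral_neg, integral_indicator_const _ measurableSet_Ico,
      measureReal_def, Real.volume_Ico, ENNReal.toReal_ofReal (by linarith : (0:ℝ) ≤ 0 - x)]
    simp

lemma integrable_gfun (x : ℝ) : Integrable (gfun x) := by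
  rcases le_or_gt 0 x with hx | hx
  · rw [gfun_eq_indicator_nonneg hx]
    exact (integrable_indicator_iff measurableSet_Ico).2
      (integrableOn_const (by simp [Real.volume_Ico]))
  · rw [gfun_eq_indicator_neg hx]
    exact (((integrable_indicator_iff measurableSet_Ico).2
      (integrableOn_const (by simp [Real.volume_Ico]))).neg)

lemma integral_abs_gfun (x : ℝ) : ∫ s, |gfun x s| = |x| := by
  rcases le_or_gt 0 x with hx | hx
  · have : (fun s => |gfun x s|) = gfun x := by
      rw [gfun_eq_indicator_nonneg hx]; funext s
      by_cases h : s ∈ Set.Ico 0 x <;> simp [Set.indicator_apply, h]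
    rw [this, integral_gfun, abs_of_nonneg hx]
  · have : (fun s => |gfun x s|) = fun s => -gfun x s := by
      rw [gfun_eq_indicator_neg hx]; funext s
      by_cases h : s ∈ Set.Ico x 0 <;> simp [Set.indicator_apply, h]
    rw [this, integral_neg, integral_gfun, abs_of_neg hx]

end Hoeffding

section Compare

lemma integral_gg (γ : Measure (ℝ × ℝ)) [IsProbabilityMeasure γ] (s t : ℝ) :
    ∫ z, gfun z.1 s * gfun z.2 t ∂γ =
      (γ {z : ℝ × ℝ | s < z.1 ∧ t < z.2}).toReal
      - (if t < 0 then 1 else 0) * (γ {z : ℝ × ℝ | s < z.1}).toReal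
      - (if s < 0 then 1 else 0) * (γ {z : ℝ × ℝ | t < z.2}).toReal
      + (if s < 0 then 1 else 0) * (if t < 0 then 1 else 0) := by
  have ms1 : MeasurableSet {z : ℝ × ℝ | s < z.1} :=
    measurableSet_lt measurable_const measurable_fst
  have ms2 : MeasurableSet {z : ℝ × ℝ | t < z.2} :=
    measurableSet_lt measurable_const measurable_snd
  have ms12 : MeasurableSet {z : ℝ × ℝ | s < z.1 ∧ t < z.2} := by
    rw [Set.setOf_and]; exact ms1.inter ms2
  have e1 : ∀ z : ℝ × ℝ, gfun z.1 s * gfun z.2 t =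
      ({z : ℝ × ℝ | s < z.1 ∧ t < z.2}.indicator (fun _ => (1:ℝ)) z)
      - (if t < 0 then 1 else 0) * ({z : ℝ × ℝ | s < z.1}.indicator (fun _ => (1:ℝ)) z)
      - (if s < 0 then 1 else 0) * ({z : ℝ × ℝ | t < z.2}.indicator (fun _ => (1:ℝ)) z)
      + (if s < 0 then 1 else 0) * (if t < 0 then 1 else 0) := by
    intro z
    unfold gfun
    by_cases h1 : s < z.1 <;> by_cases h2 : t < z.2 <;> by_cases h3 : s < 0 <;>
      by_cases h4 : t < 0 <;>
      simp [h1, h2, h3, h4, Set.indicator_apply] <;> ring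
  have i1 : Integrable ({z : ℝ × ℝ | s < z.1}.indicator (fun _ => (1:ℝ))) γ :=
    (integrable_indicator_iff ms1).2 (integrableOn_const (measure_ne_top _ _))
  have i2 : Integrable ({z : ℝ × ℝ | t < z.2}.indicator (fun _ => (1:ℝ))) γ :=
    (integrable_indicator_iff ms2).2 (integrableOn_const (measure_ne_top _ _))
  have i12 : Integrable ({z : ℝ × ℝ | s < z.1 ∧ t < z.2}.indicator (fun _ => (1:ℝ))) γ :=
    (integrable_indicator_iff ms12).2 (integrableOn_const (measure_ne_top _ _))
  calc ∫ z, gfun z.1 s * gfun z.2 t ∂γ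
      = ∫ z, (({z : ℝ × ℝ | s < z.1 ∧ t < z.2}.indicator (fun _ => (1:ℝ)) z)
        - (if t < 0 then 1 else 0) * ({z : ℝ × ℝ | s < z.1}.indicator (fun _ => (1:ℝ)) z)
        - (if s < 0 then 1 else 0) * ({z : ℝ × ℝ | t < z.2}.indicator (fun _ => (1:ℝ)) z)
        + (if s < 0 then 1 else 0) * (if t < 0 then 1 else 0)) ∂γ := by
        exact integral_congr_ae (Filter.Eventually.of_forall e1)
    _ = (γ {z : ℝ × ℝ | s < z.1 ∧ t < z.2}).toReal
      - (if t < 0 then 1 else 0) * (γ {z : ℝ × ℝ | s < z.1}).toReal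
      - (if s < 0 then 1 else 0) * (γ {z : ℝ × ℝ | t < z.2}).toReal
      + (if s < 0 then 1 else 0) * (if t < 0 then 1 else 0) := by
        have Ia : Integrable (fun z : ℝ × ℝ =>
            {z : ℝ × ℝ | s < z.1 ∧ t < z.2}.indicator (fun _ => (1:ℝ)) z
            - (if t < 0 then 1 else 0) * {z : ℝ × ℝ | s < z.1}.indicator (fun _ => (1:ℝ)) z) γ :=
          i12.sub (i1.const_mul _)
        have Ib : Integrable (fun z : ℝ × ℝ =>
            ({z : ℝ × ℝ | s < z.1 ∧ t < z.2}.indicator (fun _ => (1:ℝ)) z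
            - (if t < 0 then 1 else 0) * {z : ℝ × ℝ | s < z.1}.indicator (fun _ => (1:ℝ)) z)
            - (if s < 0 then 1 else 0) * {z : ℝ × ℝ | t < z.2}.indicator (fun _ => (1:ℝ)) z) γ :=
          Ia.sub (i2.const_mul _)
        rw [integral_add Ib (integrable_const _),
          integral_sub Ia (i2.const_mul _),
          integral_sub i12 (i1.const_mul _),
          integral_const_mul, integral_const_mul,
          integral_indicator_const _ ms12, integral_indicator_const _ ms1,
          integral_indicator_const _ ms2]
        simp
        rfl

lemma marg_fst (γ : Measure (ℝ × ℝ)) (P : Measure ℝ) (h : γ.map Prod.fst = P) (s : ℝ) :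
    γ {z : ℝ × ℝ | s < z.1} = P (Set.Ioi s) := by
  rw [← h, Measure.map_apply measurable_fst measurableSet_Ioi]; rfl

lemma marg_snd (γ : Measure (ℝ × ℝ)) (Q : Measure ℝ) (h : γ.map Prod.snd = Q) (t : ℝ) :
    γ {z : ℝ × ℝ | t < z.2} = Q (Set.Ioi t) := by
  rw [← h, Measure.map_apply measurable_snd measurableSet_Ioi]; rfl

lemma gg_integral_le (γ γ' : Measure (ℝ × ℝ)) [IsProbabilityMeasure γ] [IsProbabilityMeasure γ']
    (P Q : Measure ℝ)
    (hfst : γ.map Prod.fst = P) (hsnd : γ.map Prod.snd = Q)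
    (hfst' : γ'.map Prod.fst = P) (hsnd' : γ'.map Prod.snd = Q) (s t : ℝ)
    (hle : γ {z : ℝ × ℝ | s < z.1 ∧ t < z.2} ≤ γ' {z : ℝ × ℝ | s < z.1 ∧ t < z.2}) :
    ∫ z, gfun z.1 s * gfun z.2 t ∂γ ≤ ∫ z, gfun z.1 s * gfun z.2 t ∂γ' := by
  rw [integral_gg, integral_gg, marg_fst γ P hfst, marg_snd γ Q hsnd,
    marg_fst γ' P hfst', marg_snd γ' Q hsnd']
  have := ENNReal.toReal_le_toReal (measure_ne_top γ _) (measure_ne_top γ' _) |>.2 hle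
  linarith

lemma gg_measurable : Measurable (Function.uncurry
    (fun (z : ℝ × ℝ) (w : ℝ × ℝ) => gfun z.1 w.1 * gfun z.2 w.2)) := by
  apply Measurable.mul
  · exact gfun_measurable.comp (measurable_fst.fst.prodMk measurable_snd.fst)
  · exact gfun_measurable.comp (measurable_fst.snd.prodMk measurable_snd.snd)

lemma gg_uncurry_integrable (γ : Measure (ℝ × ℝ)) [IsProbabilityMeasure γ]
    (h2 : Integrable (fun z : ℝ × ℝ => |z.1| * |z.2|) γ) :
    Integrable (Function.uncurry
      (fun (z : ℝ × ℝ) (w : ℝ × ℝ) => gfun z.1 w.1 * gfun z.2 w.2))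
      (γ.prod (volume : Measure (ℝ × ℝ))) := by
  have hmeas := gg_measurable
  rw [integrable_prod_iff hmeas.aestronglyMeasurable]
  have key : ∀ z : ℝ × ℝ, (∫ w : ℝ × ℝ, ‖gfun z.1 w.1 * gfun z.2 w.2‖) = |z.1| * |z.2| := by
    intro z
    rw [Measure.volume_eq_prod ℝ ℝ]
    have : (fun w : ℝ × ℝ => ‖gfun z.1 w.1 * gfun z.2 w.2‖)
        = fun w : ℝ × ℝ => |gfun z.1 w.1| * |gfun z.2 w.2| := by
      funext w; rw [norm_mul]; rfl
    have hpm := integral_prod_mul (μ := (volume : Measure ℝ)) (ν := (volume : Measure ℝ))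
      (fun a => |gfun z.1 a|) (fun a => |gfun z.2 a|)
    rw [this, hpm, integral_abs_gfun, integral_abs_gfun]
  constructor
  · refine Filter.Eventually.of_forall fun z => ?_
    simp only [Function.uncurry_apply_pair]
    rw [Measure.volume_eq_prod ℝ ℝ]
    exact (integrable_gfun z.1).mul_prod (integrable_gfun z.2)
  · refine h2.congr (Filter.Eventually.of_forall fun z => ?_)
    simp only [Function.uncurry_apply_pair]
    exact (key z).symm

lemma iterated_integrable (γ : Measure (ℝ × ℝ)) [IsProbabilityMeasure γ]
    (h2 : Integrable (fun z : ℝ × ℝ => |z.1| * |z.2|) γ) :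
    Integrable (fun w : ℝ × ℝ => ∫ z, gfun z.1 w.1 * gfun z.2 w.2 ∂γ) volume := by
  refine ((gg_uncurry_integrable γ h2).integral_prod_right).congr
    (Filter.Eventually.of_forall fun w => ?_)
  simp only [Function.uncurry_apply_pair]

lemma integral_mul_eq_iterated (γ : Measure (ℝ × ℝ)) [IsProbabilityMeasure γ]
    (h2 : Integrable (fun z : ℝ × ℝ => |z.1| * |z.2|) γ) :
    ∫ z, z.1 * z.2 ∂γ = ∫ w : ℝ × ℝ, (∫ z, gfun z.1 w.1 * gfun z.2 w.2 ∂γ) := by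
  have hInt := gg_uncurry_integrable γ h2
  have swap := integral_integral_swap hInt
  have inner : ∀ z : ℝ × ℝ, (∫ w : ℝ × ℝ, gfun z.1 w.1 * gfun z.2 w.2) = z.1 * z.2 := by
    intro z
    rw [Measure.volume_eq_prod ℝ ℝ, integral_prod_mul, integral_gfun, integral_gfun]
  calc ∫ z, z.1 * z.2 ∂γ = ∫ z, (∫ w : ℝ × ℝ, gfun z.1 w.1 * gfun z.2 w.2) ∂γ := by
        exact (integral_congr_ae (Filter.Eventually.of_forall fun z => (inner z))).symm
    _ = ∫ w : ℝ × ℝ, (∫ z, gfun z.1 w.1 * gfun z.2 w.2 ∂γ) := swap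

end Compare

section Key

lemma ms_joint (s t : ℝ) : MeasurableSet {z : ℝ × ℝ | s < z.1 ∧ t < z.2} := by
  rw [Set.setOf_and]
  exact (measurableSet_lt measurable_const measurable_fst).inter
    (measurableSet_lt measurable_const measurable_snd)

lemma measure_Ioi_eq (P : Measure ℝ) [IsProbabilityMeasure P] (s : ℝ) :
    P (Set.Ioi s) = ENNReal.ofReal (1 - cdf' P s) := by
  rw [← Set.compl_Iic, measure_compl measurableSet_Iic (measure_ne_top _ _), measure_univ]
  have h1 : P (Set.Iic s) = ENNReal.ofReal (cdf' P s) := by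
    rw [cdf'_eq]; exact (ofReal_cdf P s).symm
  have h0 : 0 ≤ cdf' P s := ENNReal.toReal_nonneg
  rw [h1, ENNReal.ofReal_sub 1 h0, ENNReal.ofReal_one]

variable {P Q : Measure ℝ} [IsProbabilityMeasure P] [IsProbabilityMeasure Q]

lemma qc_pair_aemeasurable :
    AEMeasurable (fun u => (quantile' P u, quantile' Q u)) unif01 :=
  quantile'_aemeasurable.prodMk quantile'_aemeasurable

lemma qc_map_fst :
    (unif01.map (fun u => (quantile' P u, quantile' Q u))).map Prod.fst = P := by
  rw [AEMeasurable.map_map_of_aemeasurable measurable_fst.aemeasurable qc_pair_aemeasurable]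
  exact map_quantile'

lemma qc_map_snd :
    (unif01.map (fun u => (quantile' P u, quantile' Q u))).map Prod.snd = Q := by
  rw [AEMeasurable.map_map_of_aemeasurable measurable_snd.aemeasurable qc_pair_aemeasurable]
  exact map_quantile'

/-- The quantile coupling dominates every coupling on upper-right quadrants. -/
lemma qc_joint_ge (γ : Measure (ℝ × ℝ))
    (hfst : γ.map Prod.fst = P) (hsnd : γ.map Prod.snd = Q) (s t : ℝ) :
    γ {z : ℝ × ℝ | s < z.1 ∧ t < z.2} ≤
      (unif01.map (fun u => (quantile' P u, quantile' Q u))) {z : ℝ × ℝ | s < z.1 ∧ t < z.2} := by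
  set a := cdf' P s with ha
  set b := cdf' Q t with hb
  have ha0 : 0 ≤ a := ENNReal.toReal_nonneg
  have hb0 : 0 ≤ b := ENNReal.toReal_nonneg
  -- compute the quantile coupling measure
  have hqc : (unif01.map (fun u => (quantile' P u, quantile' Q u)))
      {z : ℝ × ℝ | s < z.1 ∧ t < z.2} = ENNReal.ofReal (1 - max a b) := by
    rw [Measure.map_apply_of_aemeasurable qc_pair_aemeasurable (ms_joint s t)]
    have hpre : ((fun u => (quantile' P u, quantile' Q u)) ⁻¹' {z : ℝ × ℝ | s < z.1 ∧ t < z.2})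
        ∩ Set.Ioo 0 1 = Set.Ioo (max a b) 1 := by
      ext u
      simp only [Set.mem_inter_iff, Set.mem_preimage, Set.mem_setOf_eq, Set.mem_Ioo]
      constructor
      · rintro ⟨⟨hs', ht'⟩, h0, h1⟩
        refine ⟨max_lt ?_ ?_, h1⟩
        · by_contra h; exact absurd ((quantile'_le_iff h0 h1).2 (not_lt.1 h)) (not_le.2 hs')
        · by_contra h; exact absurd ((quantile'_le_iff h0 h1).2 (not_lt.1 h)) (not_le.2 ht')
      · rintro ⟨hm, h1⟩
        have h0 : 0 < u := lt_of_le_of_lt (le_trans ha0 (le_max_left a b)) hm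
        refine ⟨⟨?_, ?_⟩, h0, h1⟩
        · by_contra h
          exact absurd ((quantile'_le_iff h0 h1).1 (not_lt.1 h))
            (not_le.2 (lt_of_le_of_lt (le_max_left a b) hm))
        · by_contra h
          exact absurd ((quantile'_le_iff h0 h1).1 (not_lt.1 h))
            (not_le.2 (lt_of_le_of_lt (le_max_right a b) hm))
    rw [unif01, Measure.restrict_apply' measurableSet_Ioo, hpre, Real.volume_Ioo]
  rw [hqc]
  rcases le_total a b with h | h
  · rw [max_eq_right h]
    calc γ {z : ℝ × ℝ | s < z.1 ∧ t < z.2} ≤ γ {z : ℝ × ℝ | t < z.2} :=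
          measure_mono fun z hz => hz.2
      _ = Q (Set.Ioi t) := marg_snd γ Q hsnd t
      _ = ENNReal.ofReal (1 - b) := measure_Ioi_eq Q t
  · rw [max_eq_left h]
    calc γ {z : ℝ × ℝ | s < z.1 ∧ t < z.2} ≤ γ {z : ℝ × ℝ | s < z.1} :=
          measure_mono fun z hz => hz.1
      _ = P (Set.Ioi s) := marg_fst γ P hfst s
      _ = ENNReal.ofReal (1 - a) := measure_Ioi_eq P s

-- Integrability of moment functions under a coupling
lemma coupling_int_fst_sq (γ : Measure (ℝ × ℝ)) (hfst : γ.map Prod.fst = P)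
    (hP2 : MemLp id 2 P) : Integrable (fun z : ℝ × ℝ => z.1 ^ 2) γ := by
  have h : Integrable (fun x : ℝ => x ^ 2) P := by simpa using hP2.integrable_sq
  rw [← hfst] at h
  have := (integrable_map_measure (by
    exact (measurable_id.pow_const 2).aestronglyMeasurable) measurable_fst.aemeasurable).1 h
  exact this

lemma coupling_int_snd_sq (γ : Measure (ℝ × ℝ)) (hsnd : γ.map Prod.snd = Q)
    (hQ2 : MemLp id 2 Q) : Integrable (fun z : ℝ × ℝ => z.2 ^ 2) γ := by
  have h : Integrable (fun x : ℝ => x ^ 2) Q := by simpa using hQ2.integrable_sq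
  rw [← hsnd] at h
  have := (integrable_map_measure (by
    exact (measurable_id.pow_const 2).aestronglyMeasurable) measurable_snd.aemeasurable).1 h
  exact this

lemma coupling_int_absmul (γ : Measure (ℝ × ℝ)) (hfst : γ.map Prod.fst = P)
    (hsnd : γ.map Prod.snd = Q) (hP2 : MemLp id 2 P) (hQ2 : MemLp id 2 Q) :
    Integrable (fun z : ℝ × ℝ => |z.1| * |z.2|) γ := by
  refine Integrable.mono ((coupling_int_fst_sq γ hfst hP2).add (coupling_int_snd_sq γ hsnd hQ2))
    ((measurable_fst.abs.mul measurable_snd.abs).aestronglyMeasurable)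
    (Filter.Eventually.of_forall fun z => ?_)
  simp only [Pi.add_apply, Real.norm_eq_abs]
  rw [abs_of_nonneg (by positivity : (0:ℝ) ≤ |z.1| * |z.2|),
    abs_of_nonneg (by positivity : (0:ℝ) ≤ z.1 ^ 2 + z.2 ^ 2)]
  nlinarith [sq_nonneg (|z.1| - |z.2|), sq_abs z.1, sq_abs z.2, abs_nonneg z.1, abs_nonneg z.2]

lemma coupling_int_mul (γ : Measure (ℝ × ℝ)) (hfst : γ.map Prod.fst = P)
    (hsnd : γ.map Prod.snd = Q) (hP2 : MemLp id 2 P) (hQ2 : MemLp id 2 Q) :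
    Integrable (fun z : ℝ × ℝ => z.1 * z.2) γ := by
  refine Integrable.mono ((coupling_int_fst_sq γ hfst hP2).add (coupling_int_snd_sq γ hsnd hQ2))
    ((measurable_fst.mul measurable_snd).aestronglyMeasurable)
    (Filter.Eventually.of_forall fun z => ?_)
  simp only [Pi.add_apply, Real.norm_eq_abs]
  rw [abs_mul, abs_of_nonneg (by positivity : (0:ℝ) ≤ z.1 ^ 2 + z.2 ^ 2)]
  nlinarith [sq_nonneg (|z.1| - |z.2|), sq_abs z.1, sq_abs z.2, abs_nonneg z.1, abs_nonneg z.2]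

lemma cost_expand (γ : Measure (ℝ × ℝ))
    (h1 : Integrable (fun z : ℝ × ℝ => z.1 ^ 2) γ)
    (h2 : Integrable (fun z : ℝ × ℝ => z.2 ^ 2) γ)
    (hm : Integrable (fun z : ℝ × ℝ => z.1 * z.2) γ) :
    ∫ z, (z.1 - z.2) ^ 2 ∂γ
      = ∫ z, z.1 ^ 2 ∂γ + ∫ z, z.2 ^ 2 ∂γ - 2 * ∫ z, z.1 * z.2 ∂γ := by
  have e : ∀ z : ℝ × ℝ, (z.1 - z.2) ^ 2 = z.1 ^ 2 + z.2 ^ 2 - 2 * (z.1 * z.2) := by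
    intro z; ring
  rw [integral_congr_ae (Filter.Eventually.of_forall e)]
  have ha : Integrable (fun z : ℝ × ℝ => z.1 ^ 2 + z.2 ^ 2) γ := h1.add h2
  rw [integral_sub ha (hm.const_mul 2), integral_add h1 h2, integral_const_mul]

lemma coupling_moment_fst (γ : Measure (ℝ × ℝ)) (hfst : γ.map Prod.fst = P) :
    ∫ z, z.1 ^ 2 ∂γ = ∫ x, x ^ 2 ∂P := by
  rw [← hfst, integral_map (f := fun x : ℝ => x ^ 2) measurable_fst.aemeasurable
    (by exact (measurable_id.pow_const 2).aestronglyMeasurable)]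

lemma coupling_moment_snd (γ : Measure (ℝ × ℝ)) (hsnd : γ.map Prod.snd = Q) :
    ∫ z, z.2 ^ 2 ∂γ = ∫ x, x ^ 2 ∂Q := by
  rw [← hsnd, integral_map (f := fun x : ℝ => x ^ 2) measurable_snd.aemeasurable
    (by exact (measurable_id.pow_const 2).aestronglyMeasurable)]

/-- Key inequality: the quantile coupling minimizes the quadratic cost. -/
lemma key_ineq (hP2 : MemLp id 2 P) (hQ2 : MemLp id 2 Q)
    (γ : Measure (ℝ × ℝ)) [IsProbabilityMeasure γ]
    (hfst : γ.map Prod.fst = P) (hsnd : γ.map Prod.snd = Q) :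
    ∫ u, (quantile' P u - quantile' Q u) ^ 2 ∂unif01 ≤ ∫ z, (z.1 - z.2) ^ 2 ∂γ := by
  set qc := unif01.map (fun u => (quantile' P u, quantile' Q u)) with hqc
  haveI : IsProbabilityMeasure qc := Measure.isProbabilityMeasure_map qc_pair_aemeasurable
  have hqfst : qc.map Prod.fst = P := qc_map_fst
  have hqsnd : qc.map Prod.snd = Q := qc_map_snd
  -- left side equals cost of quantile coupling
  have hLHS : ∫ u, (quantile' P u - quantile' Q u) ^ 2 ∂unif01 = ∫ z, (z.1 - z.2) ^ 2 ∂qc := by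
    rw [hqc, integral_map (f := fun z : ℝ × ℝ => (z.1 - z.2) ^ 2) qc_pair_aemeasurable
      (by exact ((measurable_fst.sub measurable_snd).pow_const 2).aestronglyMeasurable)]
  -- cross-term comparison
  have habsγ := coupling_int_absmul γ hfst hsnd hP2 hQ2
  have habsqc := coupling_int_absmul qc hqfst hqsnd hP2 hQ2
  have hcross : ∫ z, z.1 * z.2 ∂γ ≤ ∫ z, z.1 * z.2 ∂qc := by
    rw [integral_mul_eq_iterated γ habsγ, integral_mul_eq_iterated qc habsqc]
    refine integral_mono ?_ ?_ ?_
    · exact iterated_integrable γ habsγ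
    · exact iterated_integrable qc habsqc
    · intro w
      exact gg_integral_le γ qc P Q hfst hsnd hqfst hqsnd w.1 w.2
        (qc_joint_ge γ hfst hsnd w.1 w.2)
  rw [hLHS, cost_expand γ (coupling_int_fst_sq γ hfst hP2) (coupling_int_snd_sq γ hsnd hQ2)
      (coupling_int_mul γ hfst hsnd hP2 hQ2),
    cost_expand qc (coupling_int_fst_sq qc hqfst hP2) (coupling_int_snd_sq qc hqsnd hQ2)
      (coupling_int_mul qc hqfst hqsnd hP2 hQ2),
    coupling_moment_fst γ hfst, coupling_moment_snd γ hsnd,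
    coupling_moment_fst qc hqfst, coupling_moment_snd qc hqsnd]
  linarith

end Key

section W2facts

lemma W2sq_nonneg (P Q : Measure ℝ) : 0 ≤ W2sq P Q := by
  refine Real.sInf_nonneg fun c hc => ?_
  obtain ⟨γ, -, -, rfl⟩ := hc
  exact integral_nonneg fun z => sq_nonneg _

lemma quantile_integral_le_W2sq (P Q : Measure ℝ) [IsProbabilityMeasure P]
    [IsProbabilityMeasure Q] (hP2 : MemLp id 2 P) (hQ2 : MemLp id 2 Q) :
    ∫ u, (quantile' P u - quantile' Q u) ^ 2 ∂unif01 ≤ W2sq P Q := by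
  refine le_csInf ?_ ?_
  · exact ⟨∫ z, (z.1 - z.2) ^ 2 ∂(unif01.map (fun u => (quantile' P u, quantile' Q u))),
      unif01.map (fun u => (quantile' P u, quantile' Q u)), qc_map_fst, qc_map_snd, rfl⟩
  · rintro c ⟨γ, h1, h2, rfl⟩
    haveI : IsProbabilityMeasure γ := ⟨by
      have : γ (Prod.fst ⁻¹' Set.univ) = P Set.univ := by
        rw [← Measure.map_apply measurable_fst MeasurableSet.univ, h1]
      simpa using this⟩
    exact key_ineq hP2 hQ2 γ h1 h2

lemma W2sq_map_le (f g : ℝ → ℝ) (hf : AEMeasurable f unif01) (hg : AEMeasurable g unif01) :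
    W2sq (unif01.map f) (unif01.map g) ≤ ∫ u, (f u - g u) ^ 2 ∂unif01 := by
  have hpair : AEMeasurable (fun u => (f u, g u)) unif01 := hf.prodMk hg
  refine csInf_le ⟨0, ?_⟩ ?_
  · rintro c ⟨γ, -, -, rfl⟩
    exact integral_nonneg fun z => sq_nonneg _
  · refine ⟨unif01.map (fun u => (f u, g u)), ?_, ?_, ?_⟩
    · rw [AEMeasurable.map_map_of_aemeasurable measurable_fst.aemeasurable hpair]; rfl
    · rw [AEMeasurable.map_map_of_aemeasurable measurable_snd.aemeasurable hpair]; rfl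
    · exact (integral_map (f := fun z : ℝ × ℝ => (z.1 - z.2) ^ 2) hpair
        (by exact ((measurable_fst.sub measurable_snd).pow_const 2).aestronglyMeasurable)).symm

lemma Lp_norm_sq (G : Lp ℝ 2 unif01) : ‖G‖ ^ 2 = ∫ a, (G a) ^ 2 ∂unif01 := by
  rw [← real_inner_self_eq_norm_sq, L2.inner_def]
  refine integral_congr_ae (Filter.Eventually.of_forall fun a => ?_)
  simp only [real_inner_self_eq_norm_sq, Real.norm_eq_abs, sq_abs]

lemma coeFn_sum_smul {ι : Type*} (t : Finset ι) (c : ι → ℝ) (X : ι → Lp ℝ 2 unif01) :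
    ⇑(∑ s ∈ t, c s • X s) =ᵐ[unif01] fun a => ∑ s ∈ t, c s * (X s a) := by
  classical
  induction t using Finset.induction_on with
  | empty => simp only [Finset.sum_empty]; exact Lp.coeFn_zero (E := ℝ) (p := 2) (μ := unif01)
  | insert a t' h ih =>
    rw [Finset.sum_insert h]
    filter_upwards [Lp.coeFn_add (c a • X a) (∑ s ∈ t', c s • X s),
      Lp.coeFn_smul (c a) (X a), ih] with u h1 h2 h3
    simp only [h1, Pi.add_apply, h2, Pi.smul_apply, smul_eq_mul, h3, Finset.sum_insert h]

lemma sum_smul_sub {k : ℕ} (c d : Fin k → ℝ) (X Y : Fin k → Lp ℝ 2 unif01) :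
    (∑ s, c s • X s) - (∑ s, d s • Y s)
      = ∑ s, (c s • (X s - Y s) + (c s - d s) • Y s) := by
  rw [← Finset.sum_sub_distrib]
  refine Finset.sum_congr rfl fun s _ => ?_
  rw [smul_sub, sub_smul]
  abel

end W2facts

/-- **Continuity of the one-dimensional Wasserstein barycenter** (consistency mechanism
underlying Theorem 3). If `W₂(μ_s⁽ⁿ⁾, μ_s) → 0` and `π_s⁽ⁿ⁾ → π_s` for every `s`, then the
quantile-average barycenters converge: `W₂(ν̄_n, ν̄) → 0`. -/
theorem barycenter_continuity
    (k : ℕ) (hk : 0 < k)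
    (μn : ℕ → Fin k → Measure ℝ) (μ : Fin k → Measure ℝ)
    (hμn : ∀ n s, IsProbabilityMeasure (μn n s)) (hμ : ∀ s, IsProbabilityMeasure (μ s))
    (hμn2 : ∀ n s, MemLp id 2 (μn n s)) (hμ2 : ∀ s, MemLp id 2 (μ s))
    (πn : ℕ → Fin k → ℝ) (π : Fin k → ℝ)
    (hπnpos : ∀ n s, 0 < πn n s) (hπnsum : ∀ n, ∑ s, πn n s = 1)
    (hπpos : ∀ s, 0 < π s) (hπsum : ∑ s, π s = 1)
    (νbarn : ℕ → Measure ℝ)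
    (hνbarn : ∀ n, νbarn n = unif01.map (fun u => ∑ s, πn n s * quantile' (μn n s) u))
    (νbar : Measure ℝ)
    (hνbar : νbar = unif01.map (fun u => ∑ s, π s * quantile' (μ s) u))
    (hconv : ∀ s, Tendsto (fun n => W2 (μn n s) (μ s)) atTop (nhds 0))
    (hπconv : ∀ s, Tendsto (fun n => πn n s) atTop (nhds (π s))) :
    Tendsto (fun n => W2 (νbarn n) νbar) atTop (nhds 0) := by
  classical
  have hqn : ∀ n s, MemLp (quantile' (μn n s)) 2 unif01 := fun n s => by
    haveI := hμn n s; exact memℒp_quantile' (hμn2 n s)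
  have hq : ∀ s, MemLp (quantile' (μ s)) 2 unif01 := fun s => by
    haveI := hμ s; exact memℒp_quantile' (hμ2 s)
  have hmemfn : ∀ n, MemLp (fun u => ∑ s, πn n s * quantile' (μn n s) u) 2 unif01 :=
    fun n => memLp_finset_sum _ fun s _ => (hqn n s).const_mul _
  have hmemf : MemLp (fun u => ∑ s, π s * quantile' (μ s) u) 2 unif01 :=
    memLp_finset_sum _ fun s _ => (hq s).const_mul _
  -- Lp elements
  set Qn : ℕ → Fin k → Lp ℝ 2 unif01 :=
    fun n s => (hqn n s).toLp (quantile' (μn n s)) with hQn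
  set Q : Fin k → Lp ℝ 2 unif01 := fun s => (hq s).toLp (quantile' (μ s)) with hQ
  -- a.e. representations of the weighted sums
  have hFn : ∀ n, ⇑(∑ s, πn n s • Qn n s)
      =ᵐ[unif01] fun u => ∑ s, πn n s * quantile' (μn n s) u := fun n => by
    refine (coeFn_sum_smul Finset.univ _ _).trans ?_
    have hall : ∀ᵐ u ∂unif01, ∀ s, (Qn n s) u = quantile' (μn n s) u :=
      (MeasureTheory.ae_all_iff).2 fun s => (hqn n s).coeFn_toLp
    filter_upwards [hall] with u hu
    exact Finset.sum_congr rfl fun s _ => by rw [hu s]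
  have hF : ⇑(∑ s, π s • Q s) =ᵐ[unif01] fun u => ∑ s, π s * quantile' (μ s) u := by
    refine (coeFn_sum_smul Finset.univ _ _).trans ?_
    have hall : ∀ᵐ u ∂unif01, ∀ s, (Q s) u = quantile' (μ s) u :=
      (MeasureTheory.ae_all_iff).2 fun s => (hq s).coeFn_toLp
    filter_upwards [hall] with u hu
    exact Finset.sum_congr rfl fun s _ => by rw [hu s]
  -- norm of the difference equals the L² distance of the sums
  have hdist : ∀ n, ∫ u, ((∑ s, πn n s * quantile' (μn n s) u)
      - (∑ s, π s * quantile' (μ s) u)) ^ 2 ∂unif01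
      = ‖(∑ s, πn n s • Qn n s) - (∑ s, π s • Q s)‖ ^ 2 := fun n => by
    rw [Lp_norm_sq]
    refine integral_congr_ae ?_
    filter_upwards [Lp.coeFn_sub (∑ s, πn n s • Qn n s) (∑ s, π s • Q s), hFn n, hF]
      with u h1 h2 h3
    rw [h1, Pi.sub_apply, h2, h3]
  -- per-term bound
  have hQbound : ∀ n s, ‖Qn n s - Q s‖ ≤ W2 (μn n s) (μ s) := fun n s => by
    haveI := hμn n s; haveI := hμ s
    refine Real.le_sqrt_of_sq_le ?_
    have h1 : ‖Qn n s - Q s‖ ^ 2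
        = ∫ u, (quantile' (μn n s) u - quantile' (μ s) u) ^ 2 ∂unif01 := by
      rw [Lp_norm_sq]
      refine integral_congr_ae ?_
      filter_upwards [Lp.coeFn_sub (Qn n s) (Q s), (hqn n s).coeFn_toLp, (hq s).coeFn_toLp]
        with u h1 h2 h3
      rw [h1, Pi.sub_apply, h2, h3]
    rw [h1]
    exact quantile_integral_le_W2sq (μn n s) (μ s) (hμn2 n s) (hμ2 s)
  -- triangle inequality
  have htri : ∀ n, ‖(∑ s, πn n s • Qn n s) - (∑ s, π s • Q s)‖
      ≤ ∑ s, (πn n s * W2 (μn n s) (μ s) + |πn n s - π s| * ‖Q s‖) := fun n => by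
    rw [sum_smul_sub]
    refine le_trans (norm_sum_le _ _) (Finset.sum_le_sum fun s _ => ?_)
    refine le_trans (norm_add_le _ _) ?_
    rw [norm_smul, norm_smul, Real.norm_eq_abs, Real.norm_eq_abs,
      abs_of_pos (hπnpos n s)]
    exact add_le_add (mul_le_mul_of_nonneg_left (hQbound n s) (hπnpos n s).le) le_rfl
  -- main bound
  have hW : ∀ n, W2 (νbarn n) νbar
      ≤ ∑ s, (πn n s * W2 (μn n s) (μ s) + |πn n s - π s| * ‖Q s‖) := fun n => by
    refine le_trans ?_ (htri n)
    rw [W2, hνbarn n, hνbar]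
    have h2 := W2sq_map_le _ _ (hmemfn n).aestronglyMeasurable.aemeasurable
      hmemf.aestronglyMeasurable.aemeasurable
    calc Real.sqrt (W2sq _ _)
        ≤ Real.sqrt (∫ u, ((∑ s, πn n s * quantile' (μn n s) u)
            - (∑ s, π s * quantile' (μ s) u)) ^ 2 ∂unif01) := Real.sqrt_le_sqrt h2
      _ = ‖(∑ s, πn n s • Qn n s) - (∑ s, π s • Q s)‖ := by
          rw [hdist n, Real.sqrt_sq (norm_nonneg _)]
  -- the bound tends to 0
  have hB : Tendsto (fun n => ∑ s, (πn n s * W2 (μn n s) (μ s) + |πn n s - π s| * ‖Q s‖))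
      atTop (nhds 0) := by
    have h := tendsto_finset_sum (Finset.univ : Finset (Fin k))
      (fun s _ => (((hπconv s).mul (hconv s)).add
        ((((hπconv s).sub (tendsto_const_nhds (x := π s))).abs).mul
          (tendsto_const_nhds (x := ‖Q s‖)))))
    simpa using h
  exact squeeze_zero (fun n => Real.sqrt_nonneg _) hW hB
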